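/- (Soundness of the OPT bound) Let P ⊆ V be a k-defective clique with r(P) = k − |E(complement of G[P])|, and let V \ P be partitioned into independent sets Π_1, …, Π_χ. For every k-defective clique Q with P ⊆ Q, setting S_i = Q ∩ Π_i, we have Σ_{i=1}^{χ} ( C(|S_i|,2) + Σ_{u∈S_i} w(u) ) ≤ r(P), where w(u) = |P| − |N(u) ∩ P|. In particular |Q| = |P| + Σ_i |S_i| is at most the optimal value of the corresponding optimization problem. -/

import Mathlib

open Finset

variable {V : Type*} [Fintype V] [DecidableEq V]

/-- The set of non-edges (missing edges) of the subgraph of `G` induced by `S`,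
as a finset of unordered pairs. -/
def nonEdges (G : SimpleGraph V) [DecidableRel G.Adj] (S : Finset V) : Finset (Sym2 V) :=
  ((S ×ˢ S).filter fun p => p.1 ≠ p.2 ∧ ¬ G.Adj p.1 p.2).image fun p => s(p.1, p.2)

/-- `S` is a `k`-defective clique: the complement of `G[S]` has at most `k` edges. -/
def IsDefClique (G : SimpleGraph V) [DecidableRel G.Adj] (k : ℕ) (S : Finset V) : Prop :=
  (nonEdges G S).card ≤ k

/-- `D` is a `k`-defective set: it is a `k`-defective clique in which every vertex
is non-adjacent to at least one other vertex of `D`. -/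
def IsDefSet (G : SimpleGraph V) [DecidableRel G.Adj] (k : ℕ) (D : Finset V) : Prop :=
  (∀ u ∈ D, ∃ v ∈ D, v ≠ u ∧ ¬ G.Adj u v) ∧ IsDefClique G k D

lemma mem_nonEdges_iff {G : SimpleGraph V} [DecidableRel G.Adj] {S : Finset V} {e : Sym2 V} :
    e ∈ nonEdges G S ↔ ∃ u v, u ∈ S ∧ v ∈ S ∧ u ≠ v ∧ ¬ G.Adj u v ∧ e = s(u, v) := by
  simp only [nonEdges, Finset.mem_image, Finset.mem_filter, Finset.mem_product, Prod.exists]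
  constructor
  · rintro ⟨a, b, ⟨⟨ha, hb⟩, hne, hadj⟩, rfl⟩
    exact ⟨a, b, ha, hb, hne, hadj, rfl⟩
  · rintro ⟨a, b, ha, hb, hne, hadj, rfl⟩
    exact ⟨a, b, ⟨⟨ha, hb⟩, hne, hadj⟩, rfl⟩

lemma mem_pairs_iff {S : Finset V} {e : Sym2 V} :
    e ∈ S.offDiag.image Sym2.mk.uncurry ↔ ∃ u v, u ∈ S ∧ v ∈ S ∧ u ≠ v ∧ e = s(u, v) := by
  simp only [Finset.mem_image, Finset.mem_offDiag, Prod.exists]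
  constructor
  · rintro ⟨a, b, ⟨ha, hb, hne⟩, rfl⟩; exact ⟨a, b, ha, hb, hne, rfl⟩
  · rintro ⟨a, b, ha, hb, hne, rfl⟩; exact ⟨a, b, ⟨ha, hb, hne⟩, rfl⟩

/-- Soundness of the OPT bound: with `V \ P` partitioned into independent sets and
`S_i = Q ∩ Parts i` for a `k`-defective clique `Q ⊇ P`, the sets `S_i` satisfy the
packing-and-coloring constraint, and `|Q| = |P| + Σ_i |S_i|`. -/
theorem opt_bound_sound (G : SimpleGraph V) [DecidableRel G.Adj] (k : ℕ) (P : Finset V)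
    (hP : IsDefClique G k P) (χ : ℕ) (Parts : Fin χ → Finset V)
    (hdisj : ∀ i j, i ≠ j → Disjoint (Parts i) (Parts j))
    (hcover : Finset.univ \ P = Finset.univ.biUnion Parts)
    (hind : ∀ i, ∀ u ∈ Parts i, ∀ v ∈ Parts i, u ≠ v → ¬ G.Adj u v)
    (Q : Finset V) (hQ : IsDefClique G k Q) (hPQ : P ⊆ Q) :
    (∑ i : Fin χ, ((Q ∩ Parts i).card.choose 2 +
        ∑ u ∈ Q ∩ Parts i, (P.card - (G.neighborFinset u ∩ P).card))
      ≤ k - (nonEdges G P).card) ∧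
      Q.card = P.card + ∑ i : Fin χ, (Q ∩ Parts i).card := by
  classical
  set Si : Fin χ → Finset V := fun i => Q ∩ Parts i with hSi
  have hPartsP : ∀ i, ∀ x ∈ Parts i, x ∉ P := by
    intro i x hx hxP
    have hmem : x ∈ Finset.univ \ P := by
      rw [hcover]; exact Finset.mem_biUnion.2 ⟨i, Finset.mem_univ i, hx⟩
    exact (Finset.mem_sdiff.1 hmem).2 hxP
  have hSiParts : ∀ i, ∀ x ∈ Si i, x ∈ Parts i := fun i x hx => (Finset.mem_inter.1 hx).2
  have hSiQ : ∀ i, ∀ x ∈ Si i, x ∈ Q := fun i x hx => (Finset.mem_inter.1 hx).1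
  -- cardinality part
  have hcard : Q.card = P.card + ∑ i, (Si i).card := by
    have hQP : Q \ P = Finset.univ.biUnion Si := by
      ext x
      simp only [Finset.mem_sdiff, Finset.mem_biUnion, Finset.mem_univ, true_and, hSi,
        Finset.mem_inter]
      constructor
      · rintro ⟨hxQ, hxP⟩
        have hmem : x ∈ Finset.univ \ P := Finset.mem_sdiff.2 ⟨Finset.mem_univ x, hxP⟩
        rw [hcover] at hmem
        obtain ⟨i, -, hi⟩ := Finset.mem_biUnion.1 hmem
        exact ⟨i, hxQ, hi⟩
      · rintro ⟨i, hxQ, hxi⟩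
        exact ⟨hxQ, hPartsP i x hxi⟩
    have h1 : (Q \ P).card + P.card = Q.card := Finset.card_sdiff_add_card_eq_card hPQ
    have h2 : (Q \ P).card = ∑ i, (Si i).card := by
      rw [hQP]
      exact Finset.card_biUnion fun i _ j _ hij =>
        (hdisj i j hij).mono Finset.inter_subset_right Finset.inter_subset_right
    omega
  refine ⟨?_, hcard⟩
  -- the counting part
  set W : V → Finset (Sym2 V) := fun u => (P \ G.neighborFinset u).image (fun p => s(u, p))
    with hWdef
  set F : Fin χ → Finset (Sym2 V) := fun i => (Si i).offDiag.image Sym2.mk.uncurry ∪ (Si i).biUnion W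
    with hFdef
  have hWmem : ∀ u, ∀ e ∈ W u, ∃ p, p ∈ P ∧ ¬ G.Adj u p ∧ e = s(u, p) := by
    intro u e he
    obtain ⟨p, hp, rfl⟩ := Finset.mem_image.1 he
    rw [Finset.mem_sdiff] at hp
    exact ⟨p, hp.1, fun h => hp.2 ((G.mem_neighborFinset u p).2 h), rfl⟩
  -- each element of `F i` is a pair with one endpoint in `Parts i` and the other in
  -- `Parts i` or in `P`
  have hFmem : ∀ i, ∀ e ∈ F i, ∃ a b, a ∈ Parts i ∧ (b ∈ Parts i ∨ b ∈ P) ∧ e = s(a, b) := by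
    intro i e he
    rcases Finset.mem_union.1 he with he | he
    · obtain ⟨a, b, ha, hb, -, rfl⟩ := mem_pairs_iff.1 he
      exact ⟨a, b, hSiParts i a ha, Or.inl (hSiParts i b hb), rfl⟩
    · obtain ⟨u, hu, heW⟩ := Finset.mem_biUnion.1 he
      obtain ⟨p, hp, -, rfl⟩ := hWmem u _ heW
      exact ⟨u, p, hSiParts i u hu, Or.inr hp, rfl⟩
  -- disjointness of W's for distinct vertices outside P
  have hWdisj : ∀ u v : V, u ∉ P → u ≠ v → Disjoint (W u) (W v) := by
    intro u v huP huv
    rw [Finset.disjoint_left]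
    intro e heu hev
    obtain ⟨p, hp, -, rfl⟩ := hWmem u e heu
    obtain ⟨q, hq, -, heq⟩ := hWmem v _ hev
    rcases Sym2.eq_iff.1 heq with ⟨h1, h2⟩ | ⟨h1, h2⟩
    · exact huv h1
    · exact huP (h1.symm ▸ hq)
  -- pairs within S_i are disjoint from the W-part
  have hpairsW : ∀ i, Disjoint ((Si i).offDiag.image Sym2.mk.uncurry) ((Si i).biUnion W) := by
    intro i
    rw [Finset.disjoint_left]
    intro e he1 he2
    obtain ⟨a, b, ha, hb, -, rfl⟩ := mem_pairs_iff.1 he1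
    obtain ⟨u, hu, heW⟩ := Finset.mem_biUnion.1 he2
    obtain ⟨p, hp, -, heq⟩ := hWmem u _ heW
    rcases Sym2.eq_iff.1 heq with ⟨h1, h2⟩ | ⟨h1, h2⟩
    · exact hPartsP i b (hSiParts i b hb) (h2 ▸ hp)
    · exact hPartsP i a (hSiParts i a ha) (h1 ▸ hp)
  -- F's are pairwise disjoint
  have hFdisj : ∀ i j : Fin χ, i ≠ j → Disjoint (F i) (F j) := by
    intro i j hij
    rw [Finset.disjoint_left]
    intro e hei hej
    obtain ⟨a, b, hai, hb, rfl⟩ := hFmem i e hei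
    obtain ⟨a', b', haj, hb', heq⟩ := hFmem j _ hej
    rcases Sym2.eq_iff.1 heq with ⟨h1, h2⟩ | ⟨h1, h2⟩
    · exact Finset.notMem_empty a (Finset.disjoint_iff_inter_eq_empty.1 (hdisj i j hij) ▸ Finset.mem_inter.2 ⟨hai, h1.symm ▸ haj⟩)
    · rcases hb' with hb' | hb'
      · exact Finset.notMem_empty a (Finset.disjoint_iff_inter_eq_empty.1 (hdisj i j hij) ▸ Finset.mem_inter.2 ⟨hai, h1.symm ▸ hb'⟩)
      · exact hPartsP i a hai (h1.symm ▸ hb')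
  -- nonEdges of P is disjoint from all the F's
  have hPF : Disjoint (nonEdges G P) (Finset.univ.biUnion F) := by
    rw [Finset.disjoint_left]
    intro e he1 he2
    obtain ⟨u, v, hu, hv, -, -, rfl⟩ := mem_nonEdges_iff.1 he1
    obtain ⟨i, -, hei⟩ := Finset.mem_biUnion.1 he2
    obtain ⟨a, b, ha, -, heq⟩ := hFmem i _ hei
    rcases Sym2.eq_iff.1 heq.symm with ⟨h1, h2⟩ | ⟨h1, h2⟩
    · exact hPartsP i a ha (h1.symm ▸ hu)
    · exact hPartsP i a ha (h1.symm ▸ hv)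
  -- everything is contained in the nonEdges of Q
  have hsub : nonEdges G P ∪ Finset.univ.biUnion F ⊆ nonEdges G Q := by
    intro e he
    rcases Finset.mem_union.1 he with he | he
    · obtain ⟨u, v, hu, hv, hne, hadj, rfl⟩ := mem_nonEdges_iff.1 he
      exact mem_nonEdges_iff.2 ⟨u, v, hPQ hu, hPQ hv, hne, hadj, rfl⟩
    · obtain ⟨i, -, hei⟩ := Finset.mem_biUnion.1 he
      rcases Finset.mem_union.1 hei with hei | hei
      · obtain ⟨a, b, ha, hb, hne, rfl⟩ := mem_pairs_iff.1 hei
        exact mem_nonEdges_iff.2 ⟨a, b, hSiQ i a ha, hSiQ i b hb,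
          hne, hind i a (hSiParts i a ha) b (hSiParts i b hb) hne, rfl⟩
      · obtain ⟨u, hu, heW⟩ := Finset.mem_biUnion.1 hei
        obtain ⟨p, hp, hadj, rfl⟩ := hWmem u _ heW
        have hne : u ≠ p := fun h => hPartsP i u (hSiParts i u hu) (h ▸ hp)
        exact mem_nonEdges_iff.2 ⟨u, p, hSiQ i u hu, hPQ hp, hne, hadj, rfl⟩
  -- cardinality of W u
  have hWcard : ∀ u, (W u).card = P.card - (G.neighborFinset u ∩ P).card := by
    intro u
    have hinj : Function.Injective (fun p => s(u, p)) := fun p q h => Sym2.congr_right.1 h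
    rw [hWdef]
    rw [Finset.card_image_of_injective _ hinj]
    have h1 : (P \ G.neighborFinset u).card + (P ∩ G.neighborFinset u).card = P.card :=
      Finset.card_sdiff_add_card_inter P (G.neighborFinset u)
    rw [Finset.inter_comm] at h1
    omega
  -- cardinality of F i
  have hFcard : ∀ i, (F i).card =
      (Si i).card.choose 2 + ∑ u ∈ Si i, (P.card - (G.neighborFinset u ∩ P).card) := by
    intro i
    rw [hFdef]
    rw [Finset.card_union_of_disjoint (hpairsW i), Sym2.card_image_offDiag,
      Finset.card_biUnion fun u hu v hv huv =>
        hWdisj u v (hPartsP i u (hSiParts i u hu)) huv]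
    congr 1
    exact Finset.sum_congr rfl fun u _ => hWcard u
  -- total
  have htotal : (nonEdges G P).card + ∑ i, (F i).card ≤ k := by
    calc (nonEdges G P).card + ∑ i, (F i).card
        = (nonEdges G P ∪ Finset.univ.biUnion F).card := by
          rw [Finset.card_union_of_disjoint hPF,
            Finset.card_biUnion fun i _ j _ hij => hFdisj i j hij]
      _ ≤ (nonEdges G Q).card := Finset.card_le_card hsub
      _ ≤ k := hQ
  have hsum : ∑ i, (F i).card = ∑ i : Fin χ, ((Si i).card.choose 2 +
      ∑ u ∈ Si i, (P.card - (G.neighborFinset u ∩ P).card)) :=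
    Finset.sum_congr rfl fun i _ => hFcard i
  rw [hsum] at htotal
  exact Nat.le_sub_of_add_le (by rw [Nat.add_comm]; exact htotal)
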